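/- arXiv:0811.0400 — 6 statements merged into one kernel-verified Lean document; each statement's English description precedes it below -/
import Mathlib

section
/- Let K be a field of characteristic zero, A a commutative associative unital K-algebra, σ : A → A a K-algebra endomorphism, and ∂ : A → A a σ-derivation. For a ∈ A let a·∂ denote the K-linear operator on A sending c to a·∂(c). Then for all a, b ∈ A one has the equality of K-linear operators on A: (σ(a)·∂) ∘ (b·∂) − (σ(b)·∂) ∘ (a·∂) = (σ(a)·∂(b) − σ(b)·∂(a))·∂. -/
/-- For a σ-derivation ∂ on a commutative associative unital K-algebra A,
the twisted bracket of the operators a·∂ and b·∂ satisfies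
(σ(a)·∂) ∘ (b·∂) − (σ(b)·∂) ∘ (a·∂) = (σ(a)·∂(b) − σ(b)·∂(a))·∂. -/
theorem stmt0 {K A : Type*} [Field K] [CharZero K] [CommRing A] [Algebra K A]
    (σ : A →ₐ[K] A) (D : A →ₗ[K] A)
    (hD : ∀ a b : A, D (a * b) = D a * b + σ a * D b)
    (a b : A) :
    (σ a • D) ∘ₗ (b • D) - (σ b • D) ∘ₗ (a • D)
      = (σ a * D b - σ b * D a) • D := by
  ext c
  simp only [LinearMap.sub_apply, LinearMap.comp_apply, LinearMap.smul_apply,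
    smul_eq_mul, hD]
  ring
end

section
/- Let K be a field of characteristic zero, A a commutative associative unital K-algebra, σ : A → A a K-algebra endomorphism, ∂ : A → A a σ-derivation, and δ ∈ A an element such that ∂(σ(a)) = δ·σ(∂(a)) for all a ∈ A. Define ⟨a,b⟩ := σ(a)·∂(b) − σ(b)·∂(a) ∈ A for a, b ∈ A. Then the six-term twisted Jacobi identity holds as an identity of K-linear operators on A: the cyclic sum over (a,b,c) of ( ⟨σ(a), ⟨b,c⟩⟩ + δ·⟨a, ⟨b,c⟩⟩ )·∂ equals zero; explicitly, ( ⟨σ(a),⟨b,c⟩⟩ + δ⟨a,⟨b,c⟩⟩ + ⟨σ(b),⟨c,a⟩⟩ + δ⟨b,⟨c,a⟩⟩ + ⟨σ(c),⟨a,b⟩⟩ + δ⟨c,⟨a,b⟩⟩ )·∂ = 0 for all a, b, c ∈ A. -/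
/-- The bracket ⟨a,b⟩ := σ(a)·∂(b) − σ(b)·∂(a). -/
def twBr {K A : Type*} [Field K] [CommRing A] [Algebra K A]
    (σ : A →ₐ[K] A) (D : A →ₗ[K] A) (a b : A) : A :=
  σ a * D b - σ b * D a

/-- the six-term twisted Jacobi identity for the twisted bracket of
σ-derivation operators, as an identity of K-linear operators on A. -/
theorem stmt1 {K A : Type*} [Field K] [CharZero K] [CommRing A] [Algebra K A]
    (σ : A →ₐ[K] A) (D : A →ₗ[K] A)
    (hD : ∀ a b : A, D (a * b) = D a * b + σ a * D b)
    (δ : A) (hδ : ∀ a : A, D (σ a) = δ * σ (D a))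
    (a b c : A) :
    ((twBr σ D (σ a) (twBr σ D b c) + δ * twBr σ D a (twBr σ D b c)
      + twBr σ D (σ b) (twBr σ D c a) + δ * twBr σ D b (twBr σ D c a)
      + twBr σ D (σ c) (twBr σ D a b) + δ * twBr σ D c (twBr σ D a b)) • D
      : A →ₗ[K] A) = 0 := by
  have star : ∀ u v : A, σ u * D v - σ v * D u = u * D v - v * D u := by
    intro u v
    have h1 := hD u v
    have h2 := hD v u
    rw [mul_comm v u] at h2
    linear_combination h2 - h1
  have F : ∀ u v : A, σ (σ u) * D (D v) - σ (D v) * (δ * σ (D u))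
      = σ u * D (D v) - D v * (δ * σ (D u)) := by
    intro u v
    have h := star (σ u) (D v)
    rwa [hδ u] at h
  have key : twBr σ D (σ a) (twBr σ D b c) + δ * twBr σ D a (twBr σ D b c)
      + twBr σ D (σ b) (twBr σ D c a) + δ * twBr σ D b (twBr σ D c a)
      + twBr σ D (σ c) (twBr σ D a b) + δ * twBr σ D c (twBr σ D a b) = 0 := by
    simp only [twBr, map_sub, map_mul, hD, hδ]
    linear_combination δ * σ a * F b c - δ * σ b * F a c + δ * σ b * F c a
      - δ * σ c * F b a + δ * σ c * F a b - δ * σ a * F c b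
  rw [key, zero_smul]
end

section
/- Let (V, ·, α) be a Hom-associative algebra over a field K. For n ≥ 1 and x₀, x₁, …, xₙ ∈ V, define the left-nested product Lₙ recursively by L₁(x₀,x₁) = x₀·x₁ and Lₙ(x₀,…,xₙ) = α^{n−1}(x₀) · Lₙ₋₁(x₁,…,xₙ), and the right-nested product Rₙ recursively by R₁(x₀,x₁) = x₀·x₁ and Rₙ(x₀,…,xₙ) = Rₙ₋₁(x₀,…,xₙ₋₁) · α^{n−1}(xₙ). Then for all n ≥ 2 and all x₀,…,xₙ ∈ V: Lₙ(x₀,…,xₙ) = Rₙ(x₀,…,xₙ); that is, α^{n−1}(x₀)·(α^{n−2}(x₁)·(α^{n−3}(x₂)·⋯·(α(x_{n−2})·(x_{n−1}·xₙ))⋯)) = ((⋯((x₀·x₁)·α(x₂))⋯·α^{n−3}(x_{n−2}))·α^{n−2}(x_{n−1}))·α^{n−1}(xₙ). -/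
/-- Left-nested product: `Lnest mul α n x` is
α^{n-1}(x₀)·(α^{n-2}(x₁)·( ⋯ ·(α(x_{n-2})·(x_{n-1}·xₙ))⋯)). -/
noncomputable def Lnest {K V : Type*} [Field K] [AddCommGroup V] [Module K V]
    (mul : V →ₗ[K] V →ₗ[K] V) (α : V →ₗ[K] V) : ℕ → (ℕ → V) → V
  | 0, x => x 0
  | n + 1, x => mul ((α ^ n) (x 0)) (Lnest mul α n (fun i => x (i + 1)))

/-- Right-nested product: `Rnest mul α n x` is
((⋯((x₀·x₁)·α(x₂))⋯·α^{n-2}(x_{n-1}))·α^{n-1}(xₙ). -/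
noncomputable def Rnest {K V : Type*} [Field K] [AddCommGroup V] [Module K V]
    (mul : V →ₗ[K] V →ₗ[K] V) (α : V →ₗ[K] V) : ℕ → (ℕ → V) → V
  | 0, x => x 0
  | n + 1, x => mul (Rnest mul α n x) ((α ^ n) (x (n + 1)))

private lemma key_lemma {K V : Type*} [Field K] [AddCommGroup V] [Module K V]
    (mul : V →ₗ[K] V →ₗ[K] V) (α : V →ₗ[K] V)
    (hassoc : ∀ x y z : V, mul (α x) (mul y z) = mul (mul x y) (α z)) :
    ∀ n : ℕ, ∀ a : V, ∀ x : ℕ → V,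
      mul ((α ^ n) a) (Rnest mul α n x)
        = Rnest mul α (n + 1) (fun i => match i with | 0 => a | j + 1 => x j) := by
  intro n
  induction n with
  | zero => intro a x; simp [Rnest]
  | succ n ih =>
    intro a x
    have h1 : (α ^ (n + 1)) a = α ((α ^ n) a) := by
      rw [pow_succ']; rfl
    have h2 : (α ^ (n + 1)) (x (n + 1)) = α ((α ^ n) (x (n + 1))) := by
      rw [pow_succ']; rfl
    show mul ((α ^ (n + 1)) a) (mul (Rnest mul α n x) ((α ^ n) (x (n + 1)))) = _
    rw [h1, hassoc, ih a x]
    show _ = mul (Rnest mul α (n + 1) _) ((α ^ (n + 1)) (x (n + 1)))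
    rw [h2]

/-- in a Hom-associative algebra, the left-nested and right-nested
products of n+1 factors (with the appropriate twists) coincide for all n ≥ 2. -/
theorem stmt3 {K V : Type*} [Field K] [AddCommGroup V] [Module K V]
    (mul : V →ₗ[K] V →ₗ[K] V) (α : V →ₗ[K] V)
    (hassoc : ∀ x y z : V, mul (α x) (mul y z) = mul (mul x y) (α z)) :
    ∀ n : ℕ, 2 ≤ n → ∀ x : ℕ → V, Lnest mul α n x = Rnest mul α n x := by
  have main : ∀ n : ℕ, ∀ x : ℕ → V, Lnest mul α n x = Rnest mul α n x := by
    intro n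
    induction n with
    | zero => intro x; rfl
    | succ n ih =>
      intro x
      show mul ((α ^ n) (x 0)) (Lnest mul α n (fun i => x (i + 1))) = _
      rw [ih, key_lemma mul α hassoc n (x 0) (fun i => x (i + 1))]
      congr 1
      funext i
      cases i <;> rfl
  intro n _ x
  exact main n x
end

section
/- Let V be a vector space over a field K, let Δ : V → V ⊗ V be a coassociative comultiplication, i.e. (Δ ⊗ id) ∘ Δ = (id ⊗ Δ) ∘ Δ, and let β : V → V be a K-linear coalgebra endomorphism, i.e. (β ⊗ β) ∘ Δ = Δ ∘ β. Then Δ_β := Δ ∘ β is Hom-coassociative with respect to β: (β ⊗ Δ_β) ∘ Δ_β = (Δ_β ⊗ β) ∘ Δ_β, so (V, Δ_β, β) is a Hom-coassociative coalgebra. -/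
open TensorProduct

/-- if Δ is a coassociative comultiplication on V and β is a coalgebra
endomorphism, then Δ_β := Δ ∘ β is Hom-coassociative with respect to β. -/
theorem stmt5 {K V : Type*} [Field K] [AddCommGroup V] [Module K V]
    (Δ : V →ₗ[K] V ⊗[K] V) (β : V →ₗ[K] V)
    (hco : TensorProduct.map LinearMap.id Δ ∘ₗ Δ =
      (TensorProduct.assoc K V V V).toLinearMap ∘ₗ TensorProduct.map Δ LinearMap.id ∘ₗ Δ)
    (hβ : TensorProduct.map β β ∘ₗ Δ = Δ ∘ₗ β) :
    TensorProduct.map β (Δ ∘ₗ β) ∘ₗ (Δ ∘ₗ β) =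
      (TensorProduct.assoc K V V V).toLinearMap ∘ₗ TensorProduct.map (Δ ∘ₗ β) β ∘ₗ (Δ ∘ₗ β) := by
  have h1 : TensorProduct.map β (Δ ∘ₗ β) =
      TensorProduct.map LinearMap.id Δ ∘ₗ TensorProduct.map β β := by
    ext x y; simp
  have h2 : TensorProduct.map (Δ ∘ₗ β) β =
      TensorProduct.map Δ LinearMap.id ∘ₗ TensorProduct.map β β := by
    ext x y; simp
  calc TensorProduct.map β (Δ ∘ₗ β) ∘ₗ (Δ ∘ₗ β)
      = TensorProduct.map LinearMap.id Δ ∘ₗ (TensorProduct.map β β ∘ₗ Δ) ∘ₗ β := by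
        rw [h1]; rfl
    _ = (TensorProduct.map LinearMap.id Δ ∘ₗ Δ) ∘ₗ β ∘ₗ β := by rw [hβ]; rfl
    _ = ((TensorProduct.assoc K V V V).toLinearMap ∘ₗ TensorProduct.map Δ LinearMap.id ∘ₗ Δ) ∘ₗ β ∘ₗ β := by rw [hco]
    _ = (TensorProduct.assoc K V V V).toLinearMap ∘ₗ TensorProduct.map Δ LinearMap.id ∘ₗ (TensorProduct.map β β ∘ₗ Δ) ∘ₗ β := by rw [hβ]; rfl
    _ = (TensorProduct.assoc K V V V).toLinearMap ∘ₗ TensorProduct.map (Δ ∘ₗ β) β ∘ₗ (Δ ∘ₗ β) := by rw [h2]; rfl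
end

section
/- Let V be a vector space over a field K equipped with K-linear maps μ : V ⊗ V → V and α : V → V satisfying Hom-associativity μ ∘ (α ⊗ μ) = μ ∘ (μ ⊗ α) as maps V ⊗ V ⊗ V → V, and K-linear maps Δ : V → V ⊗ V and β : V → V satisfying Hom-coassociativity (β ⊗ Δ) ∘ Δ = (Δ ⊗ β) ∘ Δ. For f, g ∈ End_K(V) define the convolution product f ⋆ g := μ ∘ (f ⊗ g) ∘ Δ, and define γ(f) := α ∘ f ∘ β. Then for all f, g, h ∈ End_K(V): γ(f) ⋆ (g ⋆ h) = (f ⋆ g) ⋆ γ(h); i.e. the convolution product on End_K(V) is Hom-associative with twisting map γ. -/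
open TensorProduct

/-- The convolution product f ⋆ g := μ ∘ (f ⊗ g) ∘ Δ on End_K(V). -/
noncomputable def convProd {K V : Type*} [Field K] [AddCommGroup V] [Module K V]
    (μ : V ⊗[K] V →ₗ[K] V) (Δ : V →ₗ[K] V ⊗[K] V)
    (f g : V →ₗ[K] V) : V →ₗ[K] V :=
  μ ∘ₗ TensorProduct.map f g ∘ₗ Δ

lemma map_assoc_nat {K V : Type*} [Field K] [AddCommGroup V] [Module K V]
    (f g h : V →ₗ[K] V) :
    TensorProduct.map f (TensorProduct.map g h) ∘ₗ (TensorProduct.assoc K V V V).toLinearMap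
      = (TensorProduct.assoc K V V V).toLinearMap ∘ₗ
          TensorProduct.map (TensorProduct.map f g) h := by
  apply TensorProduct.ext_threefold
  intro x y z
  simp

/-- for a Hom-associative multiplication μ (twisted by α) and a
Hom-coassociative comultiplication Δ (twisted by β), the convolution product on
End_K(V) is Hom-associative with twisting map γ(f) = α ∘ f ∘ β. -/
theorem stmt6 {K V : Type*} [Field K] [AddCommGroup V] [Module K V]
    (μ : V ⊗[K] V →ₗ[K] V) (α : V →ₗ[K] V)
    (Δ : V →ₗ[K] V ⊗[K] V) (β : V →ₗ[K] V)
    (hassoc : μ ∘ₗ TensorProduct.map α μ ∘ₗ (TensorProduct.assoc K V V V).toLinearMap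
      = μ ∘ₗ TensorProduct.map μ α)
    (hcoassoc : TensorProduct.map β Δ ∘ₗ Δ
      = (TensorProduct.assoc K V V V).toLinearMap ∘ₗ TensorProduct.map Δ β ∘ₗ Δ)
    (f g h : V →ₗ[K] V) :
    convProd μ Δ (α ∘ₗ f ∘ₗ β) (convProd μ Δ g h)
      = convProd μ Δ (convProd μ Δ f g) (α ∘ₗ h ∘ₗ β) := by
  have hco := LinearMap.congr_fun hcoassoc
  have has := LinearMap.congr_fun hassoc
  have hnat := LinearMap.congr_fun (map_assoc_nat f g h)
  simp only [LinearMap.comp_apply] at hco has hnat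
  ext x
  simp only [convProd, TensorProduct.map_comp, LinearMap.comp_apply]
  rw [hco, hnat, has]
end

section
/- Let V be a vector space over a field K with K-linear maps μ : V ⊗ V → V, Δ : V → V ⊗ V and α : V → V. Assume the generalized-bialgebra compatibility Δ ∘ μ = (μ ⊗ μ) ∘ Υ ∘ (Δ ⊗ Δ) as maps V ⊗ V → V ⊗ V, where Υ : V⊗V⊗V⊗V → V⊗V⊗V⊗V is the map x₁ ⊗ x₂ ⊗ x₃ ⊗ x₄ ↦ x₁ ⊗ x₃ ⊗ x₂ ⊗ x₄, and assume α is both an algebra endomorphism, α ∘ μ = μ ∘ (α ⊗ α), and a coalgebra endomorphism, Δ ∘ α = (α ⊗ α) ∘ Δ. Then μ_α := α ∘ μ and Δ_α := Δ ∘ α satisfy the same compatibility: Δ_α ∘ μ_α = (μ_α ⊗ μ_α) ∘ Υ ∘ (Δ_α ⊗ Δ_α). -/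
open TensorProduct

private lemma ttc_natural {K V : Type*} [Field K] [AddCommGroup V] [Module K V]
    (α : V →ₗ[K] V) :
    (TensorProduct.tensorTensorTensorComm K V V V V).toLinearMap
        ∘ₗ TensorProduct.map (TensorProduct.map α α) (TensorProduct.map α α)
      = TensorProduct.map (TensorProduct.map α α) (TensorProduct.map α α)
        ∘ₗ (TensorProduct.tensorTensorTensorComm K V V V V).toLinearMap := by
  apply TensorProduct.ext_fourfold'
  intro x y p q
  simp [TensorProduct.tensorTensorTensorComm_tmul]

/-- if (V, μ, Δ) satisfies the generalized-bialgebra compatibility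
Δ ∘ μ = (μ ⊗ μ) ∘ Υ ∘ (Δ ⊗ Δ), and α is both an algebra and a coalgebra
endomorphism, then μ_α := α ∘ μ and Δ_α := Δ ∘ α satisfy the same compatibility.
Here Υ(x₁ ⊗ x₂ ⊗ x₃ ⊗ x₄) = x₁ ⊗ x₃ ⊗ x₂ ⊗ x₄ is `tensorTensorTensorComm`. -/
theorem stmt13 {K V : Type*} [Field K] [AddCommGroup V] [Module K V]
    (μ : V ⊗[K] V →ₗ[K] V) (Δ : V →ₗ[K] V ⊗[K] V) (α : V →ₗ[K] V)
    (hcompat : Δ ∘ₗ μ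
      = TensorProduct.map μ μ
          ∘ₗ (TensorProduct.tensorTensorTensorComm K V V V V).toLinearMap
          ∘ₗ TensorProduct.map Δ Δ)
    (halg : α ∘ₗ μ = μ ∘ₗ TensorProduct.map α α)
    (hcoalg : Δ ∘ₗ α = TensorProduct.map α α ∘ₗ Δ) :
    (Δ ∘ₗ α) ∘ₗ (α ∘ₗ μ)
      = TensorProduct.map (α ∘ₗ μ) (α ∘ₗ μ)
          ∘ₗ (TensorProduct.tensorTensorTensorComm K V V V V).toLinearMap
          ∘ₗ TensorProduct.map (Δ ∘ₗ α) (Δ ∘ₗ α) := by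
  have h1 : (Δ ∘ₗ α) ∘ₗ (α ∘ₗ μ)
      = TensorProduct.map α α ∘ₗ TensorProduct.map α α ∘ₗ TensorProduct.map μ μ
          ∘ₗ (TensorProduct.tensorTensorTensorComm K V V V V).toLinearMap
          ∘ₗ TensorProduct.map Δ Δ := by
    calc (Δ ∘ₗ α) ∘ₗ (α ∘ₗ μ)
        = (TensorProduct.map α α ∘ₗ Δ) ∘ₗ (α ∘ₗ μ) := by rw [hcoalg]
      _ = TensorProduct.map α α ∘ₗ (Δ ∘ₗ α) ∘ₗ μ := by
          simp only [LinearMap.comp_assoc]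
      _ = TensorProduct.map α α ∘ₗ (TensorProduct.map α α ∘ₗ Δ) ∘ₗ μ := by rw [hcoalg]
      _ = TensorProduct.map α α ∘ₗ TensorProduct.map α α ∘ₗ (Δ ∘ₗ μ) := by
          simp only [LinearMap.comp_assoc]
      _ = _ := by rw [hcompat]
  have h2 : TensorProduct.map (Δ ∘ₗ α) (Δ ∘ₗ α)
      = TensorProduct.map (TensorProduct.map α α) (TensorProduct.map α α)
        ∘ₗ TensorProduct.map Δ Δ := by
    rw [hcoalg, TensorProduct.map_comp]
  have h3 : TensorProduct.map (α ∘ₗ μ) (α ∘ₗ μ)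
      = TensorProduct.map α α ∘ₗ TensorProduct.map μ μ := TensorProduct.map_comp α α μ μ
  have h4 : TensorProduct.map μ μ
        ∘ₗ TensorProduct.map (TensorProduct.map α α) (TensorProduct.map α α)
      = TensorProduct.map α α ∘ₗ TensorProduct.map μ μ := by
    rw [← TensorProduct.map_comp, ← halg, TensorProduct.map_comp]
  rw [h1, h2, h3]
  simp only [LinearMap.comp_assoc]
  have h5 : (TensorProduct.tensorTensorTensorComm K V V V V).toLinearMap
        ∘ₗ (TensorProduct.map (TensorProduct.map α α) (TensorProduct.map α α)
        ∘ₗ TensorProduct.map Δ Δ)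
      = TensorProduct.map (TensorProduct.map α α) (TensorProduct.map α α)
        ∘ₗ ((TensorProduct.tensorTensorTensorComm K V V V V).toLinearMap
        ∘ₗ TensorProduct.map Δ Δ) := by
    rw [← LinearMap.comp_assoc, ttc_natural, LinearMap.comp_assoc]
  rw [h5]
  have h6 : TensorProduct.map μ μ
        ∘ₗ (TensorProduct.map (TensorProduct.map α α) (TensorProduct.map α α)
        ∘ₗ ((TensorProduct.tensorTensorTensorComm K V V V V).toLinearMap
        ∘ₗ TensorProduct.map Δ Δ))
      = TensorProduct.map α α
        ∘ₗ (TensorProduct.map μ μ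
        ∘ₗ ((TensorProduct.tensorTensorTensorComm K V V V V).toLinearMap
        ∘ₗ TensorProduct.map Δ Δ)) := by
    rw [← LinearMap.comp_assoc, h4, LinearMap.comp_assoc]
  rw [h6]
end
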